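/- There exists at least one probability distribution y on X that is an equilibrium point of the asymptotic dynamical system, i.e., V(y) = 0. -/

import Mathlib

open Finset

/-- The state space `X = {n ∈ ℕ^K : ∑_k A_k n_k ≤ C}` as a `Finset` of `Fin K → ℕ`. -/
def XF (K C : ℕ) (A : Fin K → ℕ) : Finset (Fin K → ℕ) :=
  (Fintype.piFinset fun _ => Finset.range (C + 1)).filter fun n => ∑ k, A k * n k ≤ C

noncomputable def wf (K : ℕ) (θ : Fin K → ℝ) (n : Fin K → ℕ) : ℝ :=
  Real.exp (∑ j, θ j * n j) / ∏ j, ((n j).factorial : ℝ)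

noncomputable def Zf (K C : ℕ) (A : Fin K → ℕ) (θ : Fin K → ℝ) : ℝ :=
  ∑ n ∈ XF K C A, wf K θ n

lemma wf_pos {K : ℕ} (θ : Fin K → ℝ) (n : Fin K → ℕ) : 0 < wf K θ n := by
  apply div_pos (Real.exp_pos _)
  exact Finset.prod_pos fun j _ => by exact_mod_cast (n j).factorial_pos

lemma zero_mem_XF (K C : ℕ) (A : Fin K → ℕ) : (0 : Fin K → ℕ) ∈ XF K C A := by
  simp [XF, Fintype.mem_piFinset]

lemma XF_nonempty (K C : ℕ) (A : Fin K → ℕ) : (XF K C A).Nonempty :=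
  ⟨0, zero_mem_XF K C A⟩

lemma Zf_pos (K C : ℕ) (A : Fin K → ℕ) (θ : Fin K → ℝ) : 0 < Zf K C A θ :=
  Finset.sum_pos (fun n _ => wf_pos θ n) (XF_nonempty K C A)

lemma mem_XF_le {K C : ℕ} {A : Fin K → ℕ} {n : Fin K → ℕ} (hn : n ∈ XF K C A) (k : Fin K) :
    n k ≤ C := by
  rw [XF, Finset.mem_filter, Fintype.mem_piFinset] at hn
  have := hn.1 k
  simpa [Nat.lt_succ_iff] using this

lemma sub_mem_XF {K C : ℕ} {A : Fin K → ℕ} {n : Fin K → ℕ} (hn : n ∈ XF K C A) (k : Fin K) :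
    n - Pi.single k 1 ∈ XF K C A := by
  rw [XF, Finset.mem_filter, Fintype.mem_piFinset] at hn ⊢
  constructor
  · intro j
    rw [Finset.mem_range]
    have h1 := hn.1 j
    rw [Finset.mem_range] at h1
    have h2 : (n - Pi.single k 1 : Fin K → ℕ) j ≤ n j := by
      simp only [Pi.sub_apply]; omega
    omega
  · refine le_trans (Finset.sum_le_sum fun j _ => ?_) hn.2
    have h2 : (n - Pi.single k 1 : Fin K → ℕ) j ≤ n j := by
      simp only [Pi.sub_apply]; omega
    exact Nat.mul_le_mul_left _ h2

lemma add_single_eq_update {K : ℕ} (n : Fin K → ℕ) (k : Fin K) :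
    n + Pi.single k 1 = Function.update n k (n k + 1) := by
  funext j
  by_cases h : j = k
  · subst h; simp
  · simp [h, Pi.single_apply, Function.update_apply]

lemma sum_shift {K : ℕ} (θ : Fin K → ℝ) (n : Fin K → ℕ) (k : Fin K) :
    ∑ j, θ j * (((n + Pi.single k 1 : Fin K → ℕ) j : ℕ) : ℝ) = θ k + ∑ j, θ j * (n j : ℝ) := by
  rw [add_single_eq_update]
  rw [← Finset.add_sum_erase Finset.univ (fun j => θ j * (n j : ℝ)) (Finset.mem_univ k)]
  rw [← Finset.add_sum_erase Finset.univ
    (fun j => θ j * ((Function.update n k (n k + 1) j : ℕ) : ℝ)) (Finset.mem_univ k)]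
  rw [Finset.sum_congr rfl (fun j hj => by
    rw [Function.update_of_ne (Finset.ne_of_mem_erase hj)])]
  simp only [Function.update_self]
  push_cast
  ring

lemma prod_shift {K : ℕ} (n : Fin K → ℕ) (k : Fin K) :
    (∏ j, (((n + Pi.single k 1 : Fin K → ℕ) j : ℕ).factorial : ℝ))
      = ((n k : ℝ) + 1) * ∏ j, ((n j).factorial : ℝ) := by
  rw [add_single_eq_update]
  rw [← Finset.mul_prod_erase Finset.univ (fun j => ((n j).factorial : ℝ)) (Finset.mem_univ k)]
  rw [← Finset.mul_prod_erase Finset.univ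
    (fun j => (((Function.update n k (n k + 1) j : ℕ)).factorial : ℝ)) (Finset.mem_univ k)]
  rw [Finset.prod_congr rfl (fun j hj => by
    rw [Function.update_of_ne (Finset.ne_of_mem_erase hj)])]
  simp only [Function.update_self, Nat.factorial_succ]
  push_cast
  ring

lemma wf_succ {K : ℕ} (θ : Fin K → ℝ) (n : Fin K → ℕ) (k : Fin K) :
    wf K θ (n + Pi.single k 1) * ((n k : ℝ) + 1) = Real.exp (θ k) * wf K θ n := by
  unfold wf
  rw [sum_shift, prod_shift, Real.exp_add]
  have h1 : (∏ j, ((n j).factorial : ℝ)) ≠ 0 :=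
    ne_of_gt (Finset.prod_pos fun j _ => by exact_mod_cast (n j).factorial_pos)
  have h2 : ((n k : ℝ) + 1) ≠ 0 := by positivity
  field_simp

lemma sub_add_single {K : ℕ} {n : Fin K → ℕ} {k : Fin K} (h : 1 ≤ n k) :
    (n - Pi.single k 1 : Fin K → ℕ) + Pi.single k 1 = n := by
  funext j
  by_cases hj : j = k
  · subst hj
    simp only [Pi.add_apply, Pi.sub_apply, Pi.single_eq_same]
    omega
  · simp only [Pi.add_apply, Pi.sub_apply, Pi.single_apply, if_neg hj]
    omega

lemma sub_single_apply {K : ℕ} (n : Fin K → ℕ) (k : Fin K) :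
    (n - Pi.single k 1 : Fin K → ℕ) k = n k - 1 := by
  simp

lemma hasDerivAt_Zf (K C : ℕ) (A : Fin K → ℕ) (θ : Fin K → ℝ) (k : Fin K) :
    HasDerivAt (fun t => Zf K C A (Function.update θ k t))
      (∑ n ∈ XF K C A, (n k : ℝ) * wf K θ n) (θ k) := by
  have hsplit : ∀ (t : ℝ) (n : Fin K → ℕ),
      ∑ j, Function.update θ k t j * (n j : ℝ)
        = t * (n k : ℝ) + ∑ j ∈ Finset.univ.erase k, θ j * (n j : ℝ) := by
    intro t n
    rw [← Finset.add_sum_erase Finset.univ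
      (fun j => Function.update θ k t j * (n j : ℝ)) (Finset.mem_univ k)]
    rw [Function.update_self]
    congr 1
    exact Finset.sum_congr rfl fun j hj => by
      rw [Function.update_of_ne (Finset.ne_of_mem_erase hj)]
  have hfun : (fun t => Zf K C A (Function.update θ k t))
      = fun t => ∑ n ∈ XF K C A,
          Real.exp (t * (n k : ℝ) + ∑ j ∈ Finset.univ.erase k, θ j * (n j : ℝ))
            / ∏ j, ((n j).factorial : ℝ) := by
    funext t
    unfold Zf wf
    exact Finset.sum_congr rfl fun n _ => by rw [hsplit]
  rw [hfun]
  apply HasDerivAt.fun_sum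
  intro n _
  have h := ((((hasDerivAt_id (θ k)).mul_const ((n k : ℕ) : ℝ)).add_const
      (∑ j ∈ Finset.univ.erase k, θ j * (n j : ℝ))).exp).div_const (∏ j, ((n j).factorial : ℝ))
  convert h using 1
  · rfl
  · rfl
  have hs := hsplit (θ k) n
  rw [Function.update_eq_self] at hs
  unfold wf
  rw [hs]
  simp only [id_eq]
  ring

noncomputable def Phi (K C : ℕ) (A : Fin K → ℕ) (lam gam mu : Fin K → ℝ) (θ : Fin K → ℝ) : ℝ :=
  (∑ k, ((gam k + mu k) / gam k * Real.exp (θ k) - lam k / gam k * θ k))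
    - Real.log (Zf K C A θ)

lemma hasDerivAt_Phi (K C : ℕ) (A : Fin K → ℕ) (lam gam mu : Fin K → ℝ)
    (θ : Fin K → ℝ) (k : Fin K) :
    HasDerivAt (fun t => Phi K C A lam gam mu (Function.update θ k t))
      ((gam k + mu k) / gam k * Real.exp (θ k) - lam k / gam k
        - (∑ n ∈ XF K C A, (n k : ℝ) * wf K θ n) / Zf K C A θ) (θ k) := by
  have h1 : HasDerivAt (fun t => ∑ j, ((gam j + mu j) / gam j
        * Real.exp (Function.update θ k t j) - lam j / gam j * Function.update θ k t j))
      ((gam k + mu k) / gam k * Real.exp (θ k) - lam k / gam k) (θ k) := by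
    have := HasDerivAt.fun_sum (u := Finset.univ)
      (A := fun j t => (gam j + mu j) / gam j * Real.exp (Function.update θ k t j)
        - lam j / gam j * Function.update θ k t j)
      (A' := fun j => if j = k then (gam k + mu k) / gam k * Real.exp (θ k) - lam k / gam k else 0)
      (x := θ k) ?_
    · simpa using this
    · intro j _
      by_cases hj : j = k
      · subst hj
        simp only [if_pos rfl, Function.update_self]
        exact ((Real.hasDerivAt_exp _).const_mul _).sub
          (by simpa using (hasDerivAt_id _).const_mul (lam _ / gam _))
      · simp only [if_neg hj, Function.update_of_ne hj]
        exact hasDerivAt_const _ _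
  have h2 : HasDerivAt (fun t => Real.log (Zf K C A (Function.update θ k t)))
      ((∑ n ∈ XF K C A, (n k : ℝ) * wf K θ n) / Zf K C A θ) (θ k) := by
    have := (hasDerivAt_Zf K C A θ k).log (by
      rw [Function.update_eq_self]
      exact ne_of_gt (Zf_pos K C A θ))
    rwa [Function.update_eq_self] at this
  exact h1.sub h2

lemma continuous_Zf (K C : ℕ) (A : Fin K → ℕ) : Continuous (Zf K C A) := by
  unfold Zf wf
  apply continuous_finset_sum
  intro n _
  exact (Real.continuous_exp.comp
    (continuous_finset_sum _ fun j _ => (continuous_apply j).mul continuous_const)).div_const _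

lemma continuous_Phi (K C : ℕ) (A : Fin K → ℕ) (lam gam mu : Fin K → ℝ) :
    Continuous (Phi K C A lam gam mu) := by
  unfold Phi
  apply Continuous.sub
  · apply continuous_finset_sum
    intro k _
    exact (continuous_const.mul (Real.continuous_exp.comp (continuous_apply k))).sub
      (continuous_const.mul (continuous_apply k))
  · rw [continuous_iff_continuousAt]
    intro θ
    exact (Real.continuousAt_log (ne_of_gt (Zf_pos K C A θ))).comp
      (continuous_Zf K C A).continuousAt

lemma log_Zf_le (K C : ℕ) (A : Fin K → ℕ) (θ : Fin K → ℝ) :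
    Real.log (Zf K C A θ)
      ≤ Real.log ((XF K C A).card : ℝ) + (C : ℝ) * ∑ k, max (θ k) 0 := by
  have hcard : (0 : ℝ) < ((XF K C A).card : ℝ) := by
    exact_mod_cast Finset.card_pos.mpr (XF_nonempty K C A)
  have hZle : Zf K C A θ
      ≤ ((XF K C A).card : ℝ) * Real.exp ((C : ℝ) * ∑ k, max (θ k) 0) := by
    unfold Zf
    calc ∑ n ∈ XF K C A, wf K θ n
        ≤ ∑ _n ∈ XF K C A, Real.exp ((C : ℝ) * ∑ k, max (θ k) 0) := by
          apply Finset.sum_le_sum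
          intro n hn
          have h1 : wf K θ n ≤ Real.exp (∑ j, θ j * (n j : ℝ)) := by
            unfold wf
            apply div_le_self (Real.exp_nonneg _)
            calc (1:ℝ) = ∏ _j : Fin K, (1:ℝ) := by simp
              _ ≤ _ := Finset.prod_le_prod (fun _ _ => zero_le_one)
                  (fun j _ => by exact_mod_cast (n j).factorial_pos)
          refine h1.trans (Real.exp_le_exp.mpr ?_)
          rw [Finset.mul_sum]
          apply Finset.sum_le_sum
          intro j _
          calc θ j * (n j : ℝ) ≤ max (θ j) 0 * (n j : ℝ) :=
                mul_le_mul_of_nonneg_right (le_max_left _ _) (by positivity)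
            _ ≤ max (θ j) 0 * (C : ℝ) := by
                apply mul_le_mul_of_nonneg_left _ (le_max_right _ _)
                exact_mod_cast mem_XF_le hn j
            _ = (C : ℝ) * max (θ j) 0 := mul_comm _ _
      _ = ((XF K C A).card : ℝ) * Real.exp ((C : ℝ) * ∑ k, max (θ k) 0) := by
          rw [Finset.sum_const, nsmul_eq_mul]
  calc Real.log (Zf K C A θ) ≤ Real.log (((XF K C A).card : ℝ)
        * Real.exp ((C : ℝ) * ∑ k, max (θ k) 0)) :=
      Real.log_le_log (Zf_pos K C A θ) hZle
    _ = _ := by rw [Real.log_mul (ne_of_gt hcard) (ne_of_gt (Real.exp_pos _)), Real.log_exp]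

lemma coord_lower (C : ℕ) (a b : ℝ) (ha : 1 ≤ a) (hb : 0 < b) (t : ℝ) :
    min b 1 * |t| - (b + C + 1) ^ 2 ≤ a * Real.exp t - b * t - (C : ℝ) * max t 0 := by
  rcases le_total t 0 with ht | ht
  · rw [max_eq_right ht, abs_of_nonpos ht]
    have h1 : min b 1 * (-t) ≤ b * (-t) :=
      mul_le_mul_of_nonneg_right (min_le_left _ _) (by linarith)
    have h2 : 0 ≤ a * Real.exp t := by positivity
    have he : (0 : ℝ) ≤ (b + C + 1) ^ 2 := sq_nonneg _
    nlinarith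
  · rw [max_eq_left ht, abs_of_nonneg ht]
    have h1 : (1 + t / 2) ^ 2 ≤ Real.exp t := by
      have h0 : (0 : ℝ) ≤ 1 + t / 2 := by linarith
      have h2 : 1 + t / 2 ≤ Real.exp (t / 2) := by
        have := Real.add_one_le_exp (t / 2); linarith
      calc (1 + t / 2) ^ 2 ≤ (Real.exp (t / 2)) ^ 2 := by
            exact pow_le_pow_left₀ h0 h2 2
        _ = Real.exp t := by rw [sq, ← Real.exp_add]; ring_nf
    have h3 : (a - 1) * Real.exp t ≥ 0 :=
      mul_nonneg (by linarith) (Real.exp_nonneg t)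
    have h4 : min b 1 * t ≤ 1 * t := mul_le_mul_of_nonneg_right (min_le_right _ _) ht
    nlinarith [sq_nonneg (t / 2 - (b + C + 1))]

lemma exists_min_Phi (K C : ℕ) (hK : 0 < K) (A : Fin K → ℕ) (lam gam mu : Fin K → ℝ)
    (hlam : ∀ k, 0 < lam k) (hgam : ∀ k, 0 < gam k) (hmu : ∀ k, 0 ≤ mu k) :
    ∃ θ : Fin K → ℝ, ∀ η, Phi K C A lam gam mu θ ≤ Phi K C A lam gam mu η := by
  haveI : Nonempty (Fin K) := ⟨⟨0, hK⟩⟩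
  set c : Fin K → ℝ := fun k => min (lam k / gam k) 1 with hc
  set e : Fin K → ℝ := fun k => (lam k / gam k + C + 1) ^ 2 with he
  have hcpos : ∀ k, 0 < c k := fun k => lt_min (div_pos (hlam k) (hgam k)) one_pos
  set cmin : ℝ := Finset.univ.inf' Finset.univ_nonempty c with hcmin
  have hcminpos : 0 < cmin := by
    rw [hcmin, Finset.lt_inf'_iff]
    exact fun k _ => hcpos k
  set D : ℝ := (∑ k, e k) + Real.log ((XF K C A).card : ℝ) with hD
  have hbound : ∀ θ, cmin * ‖θ‖ - D ≤ Phi K C A lam gam mu θ := by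
    intro θ
    have h1 : ∑ k, ((gam k + mu k) / gam k * Real.exp (θ k) - lam k / gam k * θ k
          - (C : ℝ) * max (θ k) 0) - Real.log ((XF K C A).card : ℝ)
        ≤ Phi K C A lam gam mu θ := by
      unfold Phi
      have hlog := log_Zf_le K C A θ
      have hsum : ∑ k, ((gam k + mu k) / gam k * Real.exp (θ k) - lam k / gam k * θ k
            - (C : ℝ) * max (θ k) 0)
          = (∑ k, ((gam k + mu k) / gam k * Real.exp (θ k) - lam k / gam k * θ k))
            - (C : ℝ) * ∑ k, max (θ k) 0 := by
        rw [Finset.sum_sub_distrib, Finset.mul_sum]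
      linarith
    have h2 : ∑ k, (c k * |θ k| - e k)
        ≤ ∑ k, ((gam k + mu k) / gam k * Real.exp (θ k) - lam k / gam k * θ k
            - (C : ℝ) * max (θ k) 0) := by
      apply Finset.sum_le_sum
      intro k _
      have ha : 1 ≤ (gam k + mu k) / gam k := by
        rw [le_div_iff₀ (hgam k)]
        have := hmu k; linarith
      exact coord_lower C _ _ ha (div_pos (hlam k) (hgam k)) (θ k)
    have h3 : cmin * ‖θ‖ ≤ ∑ k, c k * |θ k| := by
      have hnorm : ‖θ‖ ≤ ∑ k, |θ k| := by
        refine (pi_norm_le_iff_of_nonneg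
          (Finset.sum_nonneg fun k _ => abs_nonneg _)).mpr fun k => ?_
        rw [Real.norm_eq_abs]
        exact Finset.single_le_sum (fun j _ => abs_nonneg (θ j)) (Finset.mem_univ k)
      calc cmin * ‖θ‖ ≤ cmin * ∑ k, |θ k| :=
            mul_le_mul_of_nonneg_left hnorm hcminpos.le
        _ ≤ ∑ k, c k * |θ k| := by
            rw [Finset.mul_sum]
            exact Finset.sum_le_sum fun k _ =>
              mul_le_mul_of_nonneg_right
                (Finset.inf'_le c (Finset.mem_univ k)) (abs_nonneg _)
    have h4 : ∑ k, (c k * |θ k| - e k) = (∑ k, c k * |θ k|) - ∑ k, e k := by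
      rw [Finset.sum_sub_distrib]
    linarith
  apply Continuous.exists_forall_le (continuous_Phi K C A lam gam mu)
  apply Filter.tendsto_atTop_mono hbound
  have h5 : Filter.Tendsto (fun θ : Fin K → ℝ => cmin * ‖θ‖)
      (Filter.cocompact _) Filter.atTop :=
    Filter.Tendsto.const_mul_atTop hcminpos tendsto_norm_cocompact_atTop
  simpa [sub_eq_add_neg] using Filter.tendsto_atTop_add_const_right _ (-D) h5

/-- `⟨I_k, y⟩ = ∑_{m ∈ X} m_k y_m`. -/
noncomputable def avgI (K C : ℕ) (A : Fin K → ℕ) (y : (Fin K → ℕ) → ℝ) (k : Fin K) : ℝ :=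
  ∑ n ∈ XF K C A, (n k : ℝ) * y n

/-- The limiting vector field `V` of the network dynamics. -/
noncomputable def Vf (K C : ℕ) (A : Fin K → ℕ) (lam gam mu : Fin K → ℝ)
    (y : (Fin K → ℕ) → ℝ) (n : Fin K → ℕ) : ℝ :=
  (∑ k, (lam k + gam k * avgI K C A y k) *
      ((if 1 ≤ n k then y (n - Pi.single k 1) else 0)
        - (if n + Pi.single k 1 ∈ XF K C A then y n else 0)))
  + ∑ k, (gam k + mu k) *
      (((n k : ℝ) + 1) * (if n + Pi.single k 1 ∈ XF K C A then y (n + Pi.single k 1) else 0)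
        - (n k : ℝ) * y n)

/-- There exists at least one probability distribution `y` on `X` with `V(y) = 0`. -/
theorem equilibrium_exists (K C : ℕ) (hK : 0 < K) (hC : 0 < C)
    (A : Fin K → ℕ) (hA : ∀ k, 0 < A k)
    (lam gam mu : Fin K → ℝ)
    (hlam : ∀ k, 0 < lam k) (hgam : ∀ k, 0 < gam k) (hmu : ∀ k, 0 ≤ mu k) :
    ∃ y : (Fin K → ℕ) → ℝ,
      (∀ n ∉ XF K C A, y n = 0) ∧ (∀ n, 0 ≤ y n) ∧ (∑ n ∈ XF K C A, y n = 1) ∧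
      ∀ n ∈ XF K C A, Vf K C A lam gam mu y n = 0 := by
  classical
  obtain ⟨θ, hθ⟩ := exists_min_Phi K C hK A lam gam mu hlam hgam hmu
  have hZpos := Zf_pos K C A θ
  have hcrit : ∀ k, (gam k + mu k) / gam k * Real.exp (θ k) - lam k / gam k
      - (∑ n ∈ XF K C A, (n k : ℝ) * wf K θ n) / Zf K C A θ = 0 := by
    intro k
    have hloc : IsLocalMin (fun t => Phi K C A lam gam mu (Function.update θ k t)) (θ k) := by
      refine Filter.Eventually.of_forall fun t => ?_
      simp only [Function.update_eq_self]
      exact hθ _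
    exact hloc.hasDerivAt_eq_zero (hasDerivAt_Phi K C A lam gam mu θ k)
  set y : (Fin K → ℕ) → ℝ :=
    fun m => if m ∈ XF K C A then wf K θ m / Zf K C A θ else 0 with hy
  have havg : ∀ k, lam k + gam k * avgI K C A y k
      = (gam k + mu k) * Real.exp (θ k) := by
    intro k
    have h1 : avgI K C A y k = (∑ m ∈ XF K C A, (m k : ℝ) * wf K θ m) / Zf K C A θ := by
      unfold avgI
      have hcg : ∀ m ∈ XF K C A, (m k : ℝ) * y m = ((m k : ℝ) * wf K θ m) / Zf K C A θ := by
        intro m hm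
        rw [hy]
        simp only [if_pos hm]
        ring
      rw [Finset.sum_congr rfl hcg, ← Finset.sum_div]
    have h2 := hcrit k
    rw [h1]
    have h3 : (∑ m ∈ XF K C A, (m k : ℝ) * wf K θ m) / Zf K C A θ
        = (gam k + mu k) / gam k * Real.exp (θ k) - lam k / gam k := by linarith
    rw [h3]
    have hg := (hgam k).ne'
    field_simp
    ring
  refine ⟨y, ?_, ?_, ?_, ?_⟩
  · intro n hn
    simp only [hy, if_neg hn]
  · intro n
    simp only [hy]
    split
    · exact le_of_lt (div_pos (wf_pos θ n) hZpos)
    · exact le_refl 0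
  · simp only [hy]
    rw [Finset.sum_congr rfl fun n hn => if_pos hn, ← Finset.sum_div]
    exact div_self (ne_of_gt hZpos)
  · intro n hn
    unfold Vf
    rw [← Finset.sum_add_distrib]
    apply Finset.sum_eq_zero
    intro k _
    rw [havg k]
    have hT2 : Real.exp (θ k) * (if n + Pi.single k 1 ∈ XF K C A then y n else 0)
        = ((n k : ℝ) + 1)
          * (if n + Pi.single k 1 ∈ XF K C A then y (n + Pi.single k 1) else 0) := by
      by_cases h : n + Pi.single k 1 ∈ XF K C A
      · rw [if_pos h, if_pos h]
        simp only [hy, if_pos hn, if_pos h]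
        have hs := wf_succ θ n k
        field_simp
        linear_combination -hs
      · rw [if_neg h, if_neg h, mul_zero, mul_zero]
    have hT1 : Real.exp (θ k) * (if 1 ≤ n k then y (n - Pi.single k 1) else 0)
        = (n k : ℝ) * y n := by
      by_cases h : 1 ≤ n k
      · rw [if_pos h]
        simp only [hy, if_pos hn, if_pos (sub_mem_XF hn k)]
        have hs := wf_succ θ (n - Pi.single k 1) k
        rw [sub_add_single h] at hs
        have hk : (((n - Pi.single k 1 : Fin K → ℕ) k : ℕ) : ℝ) + 1 = (n k : ℝ) := by
          rw [sub_single_apply, Nat.cast_sub h]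
          ring
        rw [hk] at hs
        field_simp
        linear_combination -hs
      · rw [if_neg h]
        have h0 : n k = 0 := by omega
        rw [h0]
        norm_num
    linear_combination (gam k + mu k) * hT1 - (gam k + mu k) * hT2
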